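/- arXiv:0804.3647 — 7 statements merged into one kernel-verified Lean document; each statement's English description precedes it below -/
import Mathlib

section
/- Let {x^k} be a sequence generated by Algorithm 3.1 with data M > 0 and x⁰. Suppose there is a real r > 0 such that M is a Lipschitz constant of f on the closed ball B(x⁰, r), and suppose the closed ball B(x⁰, r/2) contains a point of the topological interior of Q. Then the sequence {x^k} converges to some point x* with f(x*) ≤ 0 (i.e., x* ∈ Q). -/
set_option maxHeartbeats 1000000

open Filter Topology

noncomputable section

abbrev Euc (n : ℕ) := EuclideanSpace ℝ (Fin n)

/-- `ξ` is a subgradient of `g` at `x`. -/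
def IsSubgradAt {n : ℕ} (g : Euc n → ℝ) (x ξ : Euc n) : Prop :=
  ∀ y : Euc n, g x + (inner ℝ ξ (y - x) : ℝ) ≤ g y

/-- The envelope `f(x) = max_i f_i(x)` of finitely many functions. -/
def envl {n m : ℕ} [NeZero m] (f : Fin m → Euc n → ℝ) (x : Euc n) : ℝ :=
  Finset.univ.sup' Finset.univ_nonempty fun i => f i x

/-- The sequence `x` with relaxation parameters `lam` is generated by Algorithm 3.1
with data `M` for the family `f`. -/
def IsAlgSeq {n m : ℕ} [NeZero m] (f : Fin m → Euc n → ℝ) (M : ℝ)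
    (x : ℕ → Euc n) (lam : ℕ → ℝ) : Prop :=
  ∀ k : ℕ, 0 ≤ lam k ∧
    max 0 (envl f (x k)) ≤ lam k * M ^ 2 ∧
    lam k * M ^ 2 ≤ 2 * max 0 (envl f (x k)) ∧
    ∃ (w : Fin m → ℝ) (ξ : Fin m → Euc n),
      (∀ i, 0 ≤ w i) ∧ (∑ i, w i) = 1 ∧
      (∀ i, f i (x k) < envl f (x k) → w i = 0) ∧
      (∀ i, IsSubgradAt (f i) (x k) (ξ i)) ∧
      x (k + 1) = x k - lam k • ∑ i, w i • ξ i

lemma le_envl {n m : ℕ} [NeZero m] (f : Fin m → Euc n → ℝ) (x : Euc n) (i : Fin m) :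
    f i x ≤ envl f x :=
  Finset.le_sup' (fun i => f i x) (Finset.mem_univ i)

lemma envl_subgrad {n m : ℕ} [NeZero m] (f : Fin m → Euc n → ℝ) (x : Euc n)
    (w : Fin m → ℝ) (ξ : Fin m → Euc n) (hw : ∀ i, 0 ≤ w i) (hw1 : ∑ i, w i = 1)
    (hact : ∀ i, f i x < envl f x → w i = 0) (hξ : ∀ i, IsSubgradAt (f i) x (ξ i)) :
    IsSubgradAt (envl f) x (∑ i, w i • ξ i) := by
  intro y
  have h1 : ∀ i, w i * (envl f x + (inner ℝ (ξ i) (y - x) : ℝ)) ≤ w i * envl f y := by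
    intro i
    rcases eq_or_lt_of_le (hw i) with h|h
    · simp [← h]
    · have hfx : f i x = envl f x := by
        rcases eq_or_lt_of_le (le_envl f x i) with h'|h'
        · exact h'
        · exact absurd (hact i h') (by positivity)
      have h2 := hξ i y
      have h3 : envl f x + (inner ℝ (ξ i) (y - x) : ℝ) ≤ envl f y := by
        rw [← hfx]; exact h2.trans (le_envl f y i)
      exact mul_le_mul_of_nonneg_left h3 (hw i)
  have h2 : (inner ℝ (∑ i, w i • ξ i) (y - x) : ℝ) = ∑ i, w i * (inner ℝ (ξ i) (y - x) : ℝ) := by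
    rw [sum_inner]
    exact Finset.sum_congr rfl fun i _ => real_inner_smul_left _ _ _
  calc envl f x + (inner ℝ (∑ i, w i • ξ i) (y - x) : ℝ)
      = ∑ i, w i * (envl f x + (inner ℝ (ξ i) (y - x) : ℝ)) := by
        simp [mul_add, Finset.sum_add_distrib, ← Finset.sum_mul, hw1, h2]
    _ ≤ ∑ i, w i * envl f y := Finset.sum_le_sum fun i _ => h1 i
    _ = envl f y := by rw [← Finset.sum_mul, hw1, one_mul]

theorem stmt0
    {n m : ℕ} (hn : 0 < n) [NeZero m] (f : Fin m → Euc n → ℝ)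
    (hconv : ∀ i, ConvexOn ℝ Set.univ (f i))
    (M : ℝ) (hM : 0 < M) (x : ℕ → Euc n) (lam : ℕ → ℝ)
    (halg : IsAlgSeq f M x lam) (x0 : Euc n) (hx0 : x 0 = x0)
    (r : ℝ) (hr : 0 < r)
    (hLip : ∀ y z : Euc n, y ∈ Metric.closedBall x0 r → z ∈ Metric.closedBall x0 r →
      |envl f y - envl f z| ≤ M * ‖y - z‖)
    (hint : ∃ z : Euc n, z ∈ Metric.closedBall x0 (r / 2) ∧
      z ∈ interior {y : Euc n | envl f y ≤ 0}) :
    ∃ xs : Euc n, Tendsto x atTop (𝓝 xs) ∧ envl f xs ≤ 0 := by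
  classical
  obtain ⟨z0, hz0b, hz0i⟩ := hint
  rw [mem_interior_iff_mem_nhds, Metric.mem_nhds_iff] at hz0i
  obtain ⟨ρ0, hρ0, hball0⟩ := hz0i
  set t : ℝ := min 1 (ρ0 / (2 * r)) with ht_def
  have ht0 : 0 < t := lt_min one_pos (by positivity)
  have ht1 : t ≤ 1 := min_le_left _ _
  have ht2 : t ≤ ρ0 / (2 * r) := min_le_right _ _
  set z : Euc n := z0 + t • (x0 - z0) with hz_def
  set ρ : ℝ := ρ0 / 4 with hρ_def
  have hρ : 0 < ρ := by positivity
  set τ : ℝ := t * r with hτ_def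
  have hτ : 0 < τ := by positivity
  have hz0x0 : ‖z0 - x0‖ ≤ r / 2 := by
    have := hz0b
    rwa [Metric.mem_closedBall, dist_eq_norm] at this
  have hzz0 : ‖z - z0‖ ≤ ρ0 / 4 := by
    have h1 : z - z0 = t • (x0 - z0) := by rw [hz_def]; abel
    rw [h1, norm_smul, Real.norm_of_nonneg ht0.le]
    have h2 : ‖x0 - z0‖ ≤ r / 2 := by rwa [norm_sub_rev] at hz0x0
    calc t * ‖x0 - z0‖ ≤ (ρ0 / (2 * r)) * (r / 2) :=
          mul_le_mul ht2 h2 (norm_nonneg _) (by positivity)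
      _ = ρ0 / 4 := by field_simp; ring
  have hQz : ∀ u : Euc n, ‖u‖ ≤ 1 → envl f (z + ρ • u) ≤ 0 := by
    intro u hu
    have hmem : z + ρ • u ∈ Metric.ball z0 ρ0 := by
      rw [Metric.mem_ball, dist_eq_norm]
      have h1 : z + ρ • u - z0 = (z - z0) + ρ • u := by abel
      calc ‖z + ρ • u - z0‖ = ‖(z - z0) + ρ • u‖ := by rw [h1]
        _ ≤ ‖z - z0‖ + ‖ρ • u‖ := norm_add_le _ _
        _ ≤ ρ0 / 4 + ρ0 / 4 := by
            apply add_le_add hzz0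
            rw [norm_smul, Real.norm_of_nonneg hρ.le]
            calc ρ * ‖u‖ ≤ ρ * 1 := mul_le_mul_of_nonneg_left hu hρ.le
              _ = ρ0 / 4 := by rw [hρ_def]; ring
        _ < ρ0 := by linarith
    exact hball0 hmem
  have hfz : envl f z ≤ 0 := by
    have := hQz 0 (by simp)
    simpa using this
  have hzx0 : ‖z - x0‖ ≤ (1 - t) * (r / 2) := by
    have h1 : z - x0 = (1 - t) • (z0 - x0) := by
      rw [hz_def]; module
    rw [h1, norm_smul, Real.norm_of_nonneg (by linarith : (0:ℝ) ≤ 1 - t)]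
    exact mul_le_mul_of_nonneg_left hz0x0 (by linarith)
  have hx0z : ‖x0 - z‖ ≤ r / 2 := by
    rw [norm_sub_rev]
    calc ‖z - x0‖ ≤ (1 - t) * (r / 2) := hzx0
      _ ≤ 1 * (r / 2) := by nlinarith
      _ = r / 2 := one_mul _
  have hmarg : ∀ k, ‖x k - z‖ ≤ ‖x0 - z‖ → x k ∈ Metric.closedBall x0 (r - τ) := by
    intro k hk
    rw [Metric.mem_closedBall, dist_eq_norm]
    have h1 : x k - x0 = (x k - z) + (z - x0) := by abel
    have h2 : ‖x0 - z‖ = ‖z - x0‖ := norm_sub_rev _ _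
    calc ‖x k - x0‖ ≤ ‖x k - z‖ + ‖z - x0‖ := by rw [h1]; exact norm_add_le _ _
      _ ≤ ‖z - x0‖ + ‖z - x0‖ := by rw [← h2]; linarith
      _ ≤ (1 - t) * (r / 2) + (1 - t) * (r / 2) := by linarith [hzx0]
      _ = r - τ := by rw [hτ_def]; ring
  -- the main per-step estimates
  have step : ∀ k, ‖x k - z‖ ≤ ‖x0 - z‖ →
      (‖x (k+1) - z‖^2 + 2*ρ*‖x (k+1) - x k‖ ≤ ‖x k - z‖^2 ∧
       (max 0 (envl f (x k)))^2 ≤ (r/2) * M^2 * ‖x (k+1) - x k‖) := by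
    intro k hk
    obtain ⟨hl0, hl1, hl2, w, ξ, hw0, hw1, hact, hξ, hrec⟩ := halg k
    set ν : Euc n := ∑ i, w i • ξ i with hν_def
    have hsub : IsSubgradAt (envl f) (x k) ν := envl_subgrad f (x k) w ξ hw0 hw1 hact hξ
    have hxkball : x k ∈ Metric.closedBall x0 (r - τ) := hmarg k hk
    have hxkr : x k ∈ Metric.closedBall x0 r :=
      Metric.closedBall_subset_closedBall (by linarith) hxkball
    have hxknorm : ‖x k - x0‖ ≤ r - τ := by
      have := hxkball; rwa [Metric.mem_closedBall, dist_eq_norm] at this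
    -- ‖ν‖ ≤ M
    have hνM : ‖ν‖ ≤ M := by
      rcases eq_or_ne ν 0 with h|h
      · rw [h, norm_zero]; exact hM.le
      · set u : Euc n := ‖ν‖⁻¹ • ν with hu_def
        have hν0 : (0:ℝ) < ‖ν‖ := norm_pos_iff.mpr h
        have hu1 : ‖u‖ = 1 := by
          rw [hu_def, norm_smul]; simp [abs_of_nonneg (inv_nonneg.mpr hν0.le)]
          field_simp
        have hinneru : (inner ℝ ν u : ℝ) = ‖ν‖ := by
          rw [hu_def, real_inner_smul_right, real_inner_self_eq_norm_sq, sq]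
          field_simp
        have hymem : x k + τ • u ∈ Metric.closedBall x0 r := by
          rw [Metric.mem_closedBall, dist_eq_norm]
          have h1 : x k + τ • u - x0 = (x k - x0) + τ • u := by abel
          calc ‖x k + τ • u - x0‖ = ‖(x k - x0) + τ • u‖ := by rw [h1]
            _ ≤ ‖x k - x0‖ + ‖τ • u‖ := norm_add_le _ _
            _ ≤ (r - τ) + τ := by
                apply add_le_add hxknorm
                rw [norm_smul, Real.norm_of_nonneg hτ.le, hu1, mul_one]
            _ = r := by ring
        have h1 := hsub (x k + τ • u)
        rw [add_sub_cancel_left, real_inner_smul_right, hinneru] at h1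
        have h2 := hLip (x k + τ • u) (x k) hymem hxkr
        rw [add_sub_cancel_left, norm_smul, Real.norm_of_nonneg hτ.le, hu1, mul_one] at h2
        have h3 : envl f (x k + τ • u) - envl f (x k) ≤ M * τ := (le_abs_self _).trans h2
        have h4 : τ * ‖ν‖ ≤ M * τ := by linarith
        nlinarith
    have hsubz := hsub z
    -- the interior-point inequality
    have hintq : envl f (x k) + ρ * ‖ν‖ ≤ (inner ℝ ν (x k - z) : ℝ) := by
      rcases eq_or_ne ν 0 with h|h
      · rw [h] at hsubz ⊢
        simp only [inner_zero_left, norm_zero, mul_zero, add_zero] at hsubz ⊢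
        linarith
      · set u : Euc n := ‖ν‖⁻¹ • ν with hu_def
        have hν0 : (0:ℝ) < ‖ν‖ := norm_pos_iff.mpr h
        have hu1 : ‖u‖ = 1 := by
          rw [hu_def, norm_smul]; simp [abs_of_nonneg (inv_nonneg.mpr hν0.le)]
          field_simp
        have hinneru : (inner ℝ ν u : ℝ) = ‖ν‖ := by
          rw [hu_def, real_inner_smul_right, real_inner_self_eq_norm_sq, sq]
          field_simp
        have h1 := hsub (z + ρ • u)
        have h2 : (z + ρ • u) - x k = (z - x k) + ρ • u := by abel
        rw [h2, inner_add_right, real_inner_smul_right, hinneru] at h1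
        have h3 := hQz u (le_of_eq hu1)
        have h4 : (inner ℝ ν (x k - z) : ℝ) = -(inner ℝ ν (z - x k) : ℝ) := by
          rw [← neg_sub, inner_neg_right]
        rw [h4]
        linarith
    have hrecsub : x (k+1) - z = (x k - z) - lam k • ν := by rw [hrec]; abel
    have hnormstep : ‖x (k+1) - x k‖ = lam k * ‖ν‖ := by
      have h1 : x (k+1) - x k = -(lam k • ν) := by rw [hrec]; abel
      rw [h1, norm_neg, norm_smul, Real.norm_of_nonneg hl0]
    have hexp : ‖x (k+1) - z‖^2 =
        ‖x k - z‖^2 - 2 * (lam k * (inner ℝ ν (x k - z) : ℝ)) + (lam k)^2 * ‖ν‖^2 := by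
      rw [hrecsub, norm_sub_sq_real, real_inner_smul_right, norm_smul,
        Real.norm_of_nonneg hl0, mul_pow, real_inner_comm (x k - z) ν]
    constructor
    · -- Fejér-type decrease
      rw [hnormstep]
      rcases eq_or_lt_of_le hl0 with h0|h0
      · rw [hexp, ← h0]; simp
      · have hFpos : 0 < envl f (x k) := by
          rcases le_or_gt (envl f (x k)) 0 with h|h
          · exfalso
            rw [max_eq_left h] at hl2
            have hpos : 0 < lam k * M ^ 2 := by positivity
            linarith
          · exact h
        have hmaxeq : max 0 (envl f (x k)) = envl f (x k) := max_eq_right hFpos.le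
        rw [hmaxeq] at hl2
        have hsq : (lam k)^2 * ‖ν‖^2 ≤ 2 * (lam k * envl f (x k)) := by
          have hν2 : ‖ν‖^2 ≤ M^2 := by nlinarith [norm_nonneg ν]
          nlinarith
        have h5 : 2 * lam k * (envl f (x k) + ρ * ‖ν‖) ≤
            2 * lam k * (inner ℝ ν (x k - z) : ℝ) :=
          mul_le_mul_of_nonneg_left hintq (by linarith)
        rw [hexp]
        linarith
    · -- bound on the residual
      rw [hnormstep]
      have hfle : envl f (x k) ≤ ‖ν‖ * (r/2) := by
        have h1 : (inner ℝ ν (z - x k) : ℝ) = -(inner ℝ ν (x k - z) : ℝ) := by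
          rw [← neg_sub, inner_neg_right]
        have h2 : (inner ℝ ν (x k - z) : ℝ) ≤ ‖ν‖ * ‖x k - z‖ := real_inner_le_norm _ _
        have h3 : ‖x k - z‖ ≤ r / 2 := hk.trans hx0z
        have h4 : (inner ℝ ν (x k - z) : ℝ) ≤ ‖ν‖ * (r/2) :=
          h2.trans (mul_le_mul_of_nonneg_left h3 (norm_nonneg _))
        rw [h1] at hsubz
        linarith
      have hmax : max 0 (envl f (x k)) ≤ ‖ν‖ * (r/2) :=
        max_le (by positivity) hfle
      calc (max 0 (envl f (x k)))^2 = (max 0 (envl f (x k))) * (max 0 (envl f (x k))) := sq _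
        _ ≤ (lam k * M^2) * (‖ν‖ * (r/2)) :=
            mul_le_mul hl1 hmax (le_max_left _ _) (by positivity)
        _ = (r/2) * M^2 * (lam k * ‖ν‖) := by ring
  -- Fejér monotonicity
  have hA : ∀ k, ‖x k - z‖ ≤ ‖x0 - z‖ := by
    intro k
    induction k with
    | zero => rw [hx0]
    | succ k ih =>
      have h1 := (step k ih).1
      have h2 : ‖x (k+1) - z‖^2 ≤ ‖x k - z‖^2 := by
        nlinarith [norm_nonneg (x (k+1) - x k)]
      nlinarith [norm_nonneg (x (k+1) - z), norm_nonneg (x k - z), ih,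
        norm_nonneg (x0 - z)]
  set D : ℕ → ℝ := fun k => ‖x (k+1) - x k‖ with hD_def
  have hDnn : ∀ k, 0 ≤ D k := fun k => norm_nonneg _
  have hpartial : ∀ N, ‖x N - z‖^2 + 2*ρ*(∑ k ∈ Finset.range N, D k) ≤ ‖x0 - z‖^2 := by
    intro N
    induction N with
    | zero => simp [hx0]
    | succ N ih =>
      have h1 := (step N (hA N)).1
      rw [Finset.sum_range_succ]
      have : (2:ℝ)*ρ*(∑ k ∈ Finset.range N, D k + D N)
          = 2*ρ*(∑ k ∈ Finset.range N, D k) + 2*ρ*(D N) := by ring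
      rw [this]
      have h2 : 2*ρ*(D N) = 2*ρ*‖x (N+1) - x N‖ := rfl
      nlinarith
  have hsumle : ∀ N, ∑ k ∈ Finset.range N, D k ≤ ‖x0 - z‖^2 / (2*ρ) := by
    intro N
    have h1 := hpartial N
    have h2 : 0 ≤ ‖x N - z‖^2 := sq_nonneg _
    rw [le_div_iff₀ (by positivity)]
    nlinarith
  have hsummable : Summable D :=
    summable_of_sum_range_le hDnn hsumle
  have hcauchy : CauchySeq x := by
    apply cauchySeq_of_summable_dist
    have : (fun k => dist (x k) (x (k+1))) = D := by
      funext k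
      rw [dist_eq_norm, norm_sub_rev]
    rw [this]
    exact hsummable
  obtain ⟨xs, hxs⟩ := cauchySeq_tendsto_of_complete hcauchy
  refine ⟨xs, hxs, ?_⟩
  have hD0 : Tendsto D atTop (𝓝 0) := hsummable.tendsto_atTop_zero
  have hfp : ∀ k, max 0 (envl f (x k)) ≤ Real.sqrt ((r/2) * M^2 * D k) := by
    intro k
    have := (step k (hA k)).2
    exact (Real.le_sqrt (le_max_left _ _) (by positivity)).mpr this
  have hsqrt0 : Tendsto (fun k => Real.sqrt ((r/2) * M^2 * D k)) atTop (𝓝 0) := by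
    have h1 : Tendsto (fun k => (r/2) * M^2 * D k) atTop (𝓝 0) := by
      simpa using hD0.const_mul ((r/2) * M^2)
    have := (Real.continuous_sqrt.tendsto 0).comp h1
    simpa [Function.comp_def] using this
  have hfp0 : Tendsto (fun k => max 0 (envl f (x k))) atTop (𝓝 0) :=
    tendsto_of_tendsto_of_tendsto_of_le_of_le tendsto_const_nhds hsqrt0
      (fun k => le_max_left _ _) hfp
  have hball : ∀ k, x k ∈ Metric.closedBall x0 r := fun k =>
    Metric.closedBall_subset_closedBall (by linarith) (hmarg k (hA k))
  have hxsball : xs ∈ Metric.closedBall x0 r :=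
    Metric.isClosed_closedBall.mem_of_tendsto hxs (Filter.Eventually.of_forall hball)
  have hdist : Tendsto (fun k => dist (x k) xs) atTop (𝓝 0) :=
    tendsto_iff_dist_tendsto_zero.mp hxs
  have hle : ∀ k, envl f xs ≤ max 0 (envl f (x k)) + M * dist (x k) xs := by
    intro k
    have h1 := hLip xs (x k) hxsball (hball k)
    have h2 : envl f xs - envl f (x k) ≤ M * ‖xs - x k‖ := (le_abs_self _).trans h1
    have h3 : dist (x k) xs = ‖xs - x k‖ := by rw [dist_eq_norm, norm_sub_rev]
    have h4 : envl f (x k) ≤ max 0 (envl f (x k)) := le_max_right _ _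
    rw [h3]
    linarith
  have hlim : Tendsto (fun k => max 0 (envl f (x k)) + M * dist (x k) xs) atTop (𝓝 0) := by
    have := hfp0.add (hdist.const_mul M)
    simpa [mul_comm] using this
  exact ge_of_tendsto hlim (Filter.Eventually.of_forall hle)
end
end

section
/- (Lemma 4.5.) Let {x^k} be a sequence generated by Algorithm 3.1 with data M > 0 and x⁰, let r > 0 be such that M is a Lipschitz constant of f on the closed ball B(x⁰, r), suppose the closed ball B(x⁰, r/2) contains a point of Q, and suppose in addition that either (i) the closed ball B(x⁰, r/2) contains a point of the topological interior of Q, or (ii) the envelope f is strictly convex. Then {x^k} has at most one accumulation point; equivalently, if x* is an accumulation point of {x^k}, then the whole sequence {x^k} converges to x*. -/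
open Filter Topology

noncomputable section

private lemma aux_le_of_sq {a b : ℝ} (ha : 0 ≤ a) (hb : 0 ≤ b) (h : a ^ 2 ≤ b ^ 2) :
    a ≤ b := by nlinarith

private lemma aux_lt_of_sq {a b : ℝ} (ha : 0 ≤ a) (hb : 0 ≤ b) (h : a ^ 2 < b ^ 2) :
    a < b := by nlinarith

private lemma aux_continuous_sup' {ι : Type*} {α : Type*} [TopologicalSpace α]
    {s : Finset ι} (hs : s.Nonempty) (g : ι → α → ℝ) (hg : ∀ i, Continuous (g i)) :
    Continuous fun x => s.sup' hs fun i => g i x := by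
  induction hs using Finset.Nonempty.cons_induction with
  | singleton a => simpa using hg a
  | cons a s ha hs ih =>
    have heq : (fun x => (Finset.cons a s ha).sup' (Finset.cons_nonempty ha) fun i => g i x)
        = fun x => (g a x) ⊔ (s.sup' hs fun i => g i x) := by
      funext x
      exact Finset.sup'_cons (α := ℝ) (f := fun i => g i x) hs
    rw [heq]
    exact (hg a).max ih

/-- Continuity of the envelope. -/
private lemma aux_continuous_envl {n m : ℕ} [NeZero m] (f : Fin m → Euc n → ℝ)
    (hf : ∀ i, Continuous (f i)) : Continuous (envl f) :=
  aux_continuous_sup' Finset.univ_nonempty f hf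

set_option maxHeartbeats 2000000 in
theorem stmt7
    {n m : ℕ} (hn : 0 < n) [NeZero m] (f : Fin m → Euc n → ℝ)
    (hconv : ∀ i, ConvexOn ℝ Set.univ (f i))
    (M : ℝ) (hM : 0 < M) (x : ℕ → Euc n) (lam : ℕ → ℝ)
    (halg : IsAlgSeq f M x lam) (x0 : Euc n) (hx0 : x 0 = x0)
    (r : ℝ) (hr : 0 < r)
    (hLip : ∀ y z : Euc n, y ∈ Metric.closedBall x0 r → z ∈ Metric.closedBall x0 r →
      |envl f y - envl f z| ≤ M * ‖y - z‖)
    (hfeas : ∃ z : Euc n, z ∈ Metric.closedBall x0 (r / 2) ∧ envl f z ≤ 0)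
    (hcond : (∃ z : Euc n, z ∈ Metric.closedBall x0 (r / 2) ∧
        z ∈ interior {y : Euc n | envl f y ≤ 0}) ∨
      StrictConvexOn ℝ Set.univ (envl f)) :
    ∀ xs : Euc n, (∃ φ : ℕ → ℕ, StrictMono φ ∧ Tendsto (x ∘ φ) atTop (𝓝 xs)) →
      Tendsto x atTop (𝓝 xs) := by
  subst hx0
  intro xs hacc
  obtain ⟨φ, hφmono, hφtend⟩ := hacc
  set F := envl f with hFdef
  -- continuity of F
  have hficont : ∀ i, Continuous (f i) := by
    intro i
    have := (hconv i).continuousOn isOpen_univ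
    rw [← continuousOn_univ]; exact this
  have hFcont : Continuous F := aux_continuous_envl f hficont
  -- extract subgradient steps
  have hstep : ∀ k, ∃ ν : Euc n, IsSubgradAt F (x k) ν ∧ x (k + 1) = x k - lam k • ν := by
    intro k
    obtain ⟨hl0, h1, h2, w, ξ, hw0, hw1, hwmax, hξ, hrec⟩ := halg k
    refine ⟨∑ i, w i • ξ i, ?_, hrec⟩
    intro y
    have hsum1 : (inner ℝ (∑ i, w i • ξ i) (y - x k) : ℝ)
        = ∑ i, w i * (inner ℝ (ξ i) (y - x k) : ℝ) := by
      rw [sum_inner]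
      exact Finset.sum_congr rfl fun i _ => real_inner_smul_left _ _ _
    have hFx : ∑ i, w i * f i (x k) = F (x k) := by
      have : ∀ i ∈ Finset.univ, w i * f i (x k) = w i * F (x k) := by
        intro i _
        rcases lt_or_ge (f i (x k)) (F (x k)) with h | h
        · rw [hwmax i h]; ring
        · have hle : f i (x k) ≤ F (x k) := Finset.le_sup' (fun j => f j (x k)) (Finset.mem_univ i)
          rw [le_antisymm hle h]
      rw [Finset.sum_congr rfl this, ← Finset.sum_mul, hw1, one_mul]
    have hFy : ∑ i, w i * f i y ≤ F y := by
      calc ∑ i, w i * f i y ≤ ∑ i, w i * F y := by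
            refine Finset.sum_le_sum fun i _ => ?_
            exact mul_le_mul_of_nonneg_left
              (Finset.le_sup' (fun j => f j y) (Finset.mem_univ i)) (hw0 i)
        _ = F y := by rw [← Finset.sum_mul, hw1, one_mul]
    calc F (x k) + (inner ℝ (∑ i, w i • ξ i) (y - x k) : ℝ)
        = ∑ i, w i * (f i (x k) + (inner ℝ (ξ i) (y - x k) : ℝ)) := by
          rw [hsum1, ← hFx]
          rw [← Finset.sum_add_distrib]
          exact Finset.sum_congr rfl fun i _ => by ring
      _ ≤ ∑ i, w i * f i y := by
          refine Finset.sum_le_sum fun i _ => ?_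
          exact mul_le_mul_of_nonneg_left (hξ i y) (hw0 i)
      _ ≤ F y := hFy
  choose ν hν hxstep using hstep
  -- basic subgradient inequality, flipped
  have hsg : ∀ k (y : Euc n), F (x k) - F y ≤ (inner ℝ (ν k) (x k - y) : ℝ) := by
    intro k y
    have h := hν k y
    have hflip : (inner ℝ (ν k) (y - x k) : ℝ) = -(inner ℝ (ν k) (x k - y) : ℝ) := by
      rw [show y - x k = -(x k - y) from (neg_sub _ _).symm, inner_neg_right]
    rw [hflip] at h; linarith
  -- quadratic expansion
  have hquad : ∀ k (z : Euc n), ‖x (k + 1) - z‖ ^ 2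
      = ‖x k - z‖ ^ 2 - 2 * lam k * (inner ℝ (ν k) (x k - z) : ℝ)
        + lam k ^ 2 * ‖ν k‖ ^ 2 := by
    intro k z
    have : x (k + 1) - z = (x k - z) - lam k • ν k := by
      rw [hxstep k]; abel
    rw [this, norm_sub_sq_real, real_inner_smul_right, norm_smul, real_inner_comm,
      mul_pow, Real.norm_eq_abs, sq_abs]
    ring
  -- decrease inequality
  have hdec : ∀ k (z : Euc n), ‖ν k‖ ≤ M →
      ‖x (k + 1) - z‖ ^ 2 ≤ ‖x k - z‖ ^ 2
        - 2 * lam k * ((inner ℝ (ν k) (x k - z) : ℝ) - max 0 (F (x k))) := by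
    intro k z hνM
    have hl0 := (halg k).1
    have h2 := (halg k).2.2.1
    have hq := hquad k z
    have hν2 : ‖ν k‖ ^ 2 ≤ M ^ 2 := by nlinarith [norm_nonneg (ν k)]
    have key : lam k ^ 2 * ‖ν k‖ ^ 2 ≤ lam k * (2 * max 0 (F (x k))) := by
      nlinarith [mul_le_mul_of_nonneg_left h2 hl0, sq_nonneg (lam k)]
    nlinarith [hq]
  -- lam k = 0 when F (x k) ≤ 0
  have hlamzero : ∀ k, F (x k) ≤ 0 → x (k + 1) = x k := by
    intro k h
    have h2 := (halg k).2.2.1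
    have hl0 := (halg k).1
    have hmax : max 0 (F (x k)) = 0 := max_eq_left h
    have hle : lam k ≤ 0 := by
      rw [hmax] at h2
      by_contra hcon
      push_neg at hcon
      nlinarith [pow_pos hM 2]
    rw [hxstep k, le_antisymm hle hl0]; simp
  -- Fejér inequality (squared)
  have hfejer : ∀ k (z : Euc n), ‖ν k‖ ≤ M → F z ≤ 0 →
      ‖x (k + 1) - z‖ ^ 2 ≤ ‖x k - z‖ ^ 2 := by
    intro k z hνM hz
    rcases le_or_gt (F (x k)) 0 with h | h
    · rw [hlamzero k h]
    · have hd := hdec k z hνM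
      have hmax : max 0 (F (x k)) = F (x k) := max_eq_right h.le
      have hgap : max 0 (F (x k)) ≤ (inner ℝ (ν k) (x k - z) : ℝ) := by
        rw [hmax]
        have := hsg k z
        linarith
      have hl0 := (halg k).1
      nlinarith [mul_nonneg hl0 (sub_nonneg.mpr hgap)]
  -- subgradient norm bound inside the open ball
  have hnub : ∀ k, ‖x k - x 0‖ < r → ‖ν k‖ ≤ M := by
    intro k hk
    rcases eq_or_ne (ν k) 0 with h0 | h0
    · rw [h0]; simpa using hM.le
    · have hν0 : 0 < ‖ν k‖ := norm_pos_iff.mpr h0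
      set s := r - ‖x k - x 0‖ with hs
      have hspos : 0 < s := by simp [hs]; linarith
      set y := x k + (s / ‖ν k‖) • ν k with hy
      have hyball : y ∈ Metric.closedBall (x 0) r := by
        rw [Metric.mem_closedBall, dist_eq_norm]
        have : y - x 0 = (x k - x 0) + (s / ‖ν k‖) • ν k := by rw [hy]; abel
        rw [this]
        calc ‖(x k - x 0) + (s / ‖ν k‖) • ν k‖
            ≤ ‖x k - x 0‖ + ‖(s / ‖ν k‖) • ν k‖ := norm_add_le _ _
          _ = ‖x k - x 0‖ + s := by
              rw [norm_smul, Real.norm_eq_abs, abs_of_pos (div_pos hspos hν0),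
                div_mul_cancel₀ _ hν0.ne']
          _ = r := by rw [hs]; ring
      have hxball : x k ∈ Metric.closedBall (x 0) r := by
        rw [Metric.mem_closedBall, dist_eq_norm]; linarith
      have hsub := hν k y
      have hinner : (inner ℝ (ν k) (y - x k) : ℝ) = s * ‖ν k‖ := by
        have : y - x k = (s / ‖ν k‖) • ν k := by rw [hy]; abel
        rw [this, real_inner_smul_right, real_inner_self_eq_norm_mul_norm]
        field_simp
      have hlip := hLip y (x k) hyball hxball
      have hyx : ‖y - x k‖ = s := by
        have : y - x k = (s / ‖ν k‖) • ν k := by rw [hy]; abel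
        rw [this, norm_smul, Real.norm_eq_abs, abs_of_pos (div_pos hspos hν0),
          div_mul_cancel₀ _ hν0.ne']
      rw [hyx] at hlip
      have h1 : F y - F (x k) ≤ M * s := (abs_le.mp hlip).2
      rw [hinner] at hsub
      have : s * ‖ν k‖ ≤ M * s := by linarith
      have := (mul_le_mul_iff_right₀ hspos).mp (by linarith [this] : s * ‖ν k‖ ≤ s * M)
      linarith
  -- the counting contradiction
  have hcount : ∀ (zb : Euc n) (η δ : ℝ), 0 < η → 0 < δ →
      (∀ k, ‖x (k + 1) - zb‖ ^ 2 ≤ ‖x k - zb‖ ^ 2) →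
      (∀ k, ‖x k - xs‖ ≤ δ → ‖x (k + 1) - zb‖ ^ 2 ≤ ‖x k - zb‖ ^ 2 - η) → False := by
    intro zb η δ hη hδ hmono hdrop
    have hanti : Antitone fun k => ‖x k - zb‖ ^ 2 := antitone_nat_of_succ_le hmono
    obtain ⟨J, hJ⟩ : ∃ J, ∀ j ≥ J, ‖x (φ j) - xs‖ ≤ δ := by
      have := (Metric.tendsto_atTop.mp hφtend) δ hδ
      obtain ⟨J, hJ⟩ := this
      exact ⟨J, fun j hj => by
        have := hJ j hj
        rw [Function.comp_apply, dist_eq_norm] at this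
        linarith⟩
    have key : ∀ i : ℕ, ‖x (φ (J + i)) - zb‖ ^ 2 ≤ ‖x (φ J) - zb‖ ^ 2 - i * η := by
      intro i
      induction i with
      | zero => simp
      | succ i ih =>
        have h1 : ‖x (φ (J + i) + 1) - zb‖ ^ 2 ≤ ‖x (φ (J + i)) - zb‖ ^ 2 - η :=
          hdrop _ (hJ _ (Nat.le_add_right J i))
        have hlt : φ (J + i) + 1 ≤ φ (J + i + 1) := hφmono (by omega)
        have h2 : ‖x (φ (J + i + 1)) - zb‖ ^ 2 ≤ ‖x (φ (J + i) + 1) - zb‖ ^ 2 := hanti hlt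
        have : (J + (i + 1)) = (J + i + 1) := by omega
        rw [this]
        push_cast
        linarith
    obtain ⟨i, hi⟩ := exists_nat_gt (‖x (φ J) - zb‖ ^ 2 / η)
    have h1 := key i
    have h2 : (0 : ℝ) ≤ ‖x (φ (J + i)) - zb‖ ^ 2 := sq_nonneg _
    have h3 : ‖x (φ J) - zb‖ ^ 2 < i * η := by
      rw [div_lt_iff₀ hη] at hi; linarith
    linarith
  -- main case analysis: all iterates lie in the open ball, and F xs ≤ 0
  have main : (∀ k, ‖x k - x 0‖ < r) ∧ F xs ≤ 0 := by
    rcases hcond with ⟨z, hzb, hzint⟩ | hsc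
    · -- case (i): interior point
      obtain ⟨ρ, hρpos, hρ⟩ : ∃ ρ > 0, Metric.closedBall z ρ ⊆ {y : Euc n | F y ≤ 0} := by
        have hnhds : {y : Euc n | F y ≤ 0} ∈ 𝓝 z := mem_interior_iff_mem_nhds.mp hzint
        obtain ⟨ρ, hρpos, hρ⟩ := Metric.nhds_basis_closedBall.mem_iff.mp hnhds
        exact ⟨ρ, hρpos, hρ⟩
      -- construct a strictly interior feasible point
      obtain ⟨z', ρ₂, hρ₂, hz'r, hz'Q⟩ : ∃ (z' : Euc n) (ρ₂ : ℝ), 0 < ρ₂ ∧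
          ‖z' - x 0‖ < r / 2 ∧ ∀ y : Euc n, ‖y - z'‖ ≤ ρ₂ → F y ≤ 0 := by
        rcases eq_or_ne z (x 0) with hzx | hzx
        · refine ⟨z, ρ, hρpos, ?_, ?_⟩
          · rw [hzx]; simpa using (by linarith : (0:ℝ) < r / 2)
          · intro y hy
            exact hρ (by rw [Metric.mem_closedBall, dist_eq_norm]; exact hy)
        · have hzx0 : 0 < ‖z - x 0‖ := by
            rw [norm_pos_iff]; exact sub_ne_zero.mpr hzx
          set t := min (1 / 2 : ℝ) (ρ / (2 * ‖z - x 0‖)) with ht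
          have ht0 : 0 < t := by
            apply lt_min (by norm_num)
            positivity
          have ht1 : t ≤ 1 / 2 := min_le_left _ _
          have ht2 : t * ‖z - x 0‖ ≤ ρ / 2 := by
            have : t ≤ ρ / (2 * ‖z - x 0‖) := min_le_right _ _
            calc t * ‖z - x 0‖ ≤ (ρ / (2 * ‖z - x 0‖)) * ‖z - x 0‖ :=
                  mul_le_mul_of_nonneg_right this (norm_nonneg _)
              _ = ρ / 2 := by field_simp
          refine ⟨z + t • (x 0 - z), ρ / 2, by linarith, ?_, ?_⟩
          · have heq : z + t • (x 0 - z) - x 0 = (1 - t) • (z - x 0) := by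
              module
            rw [heq, norm_smul, Real.norm_eq_abs, abs_of_pos (by linarith : (0:ℝ) < 1 - t)]
            have hle : ‖z - x 0‖ ≤ r / 2 := by
              rw [Metric.mem_closedBall, dist_eq_norm] at hzb; exact hzb
            nlinarith
          · intro y hy
            refine hρ ?_
            rw [Metric.mem_closedBall, dist_eq_norm]
            have heq : z + t • (x 0 - z) - z = t • (x 0 - z) := by abel
            have hz'z : ‖z + t • (x 0 - z) - z‖ ≤ ρ / 2 := by
              rw [heq, norm_smul, Real.norm_eq_abs, abs_of_pos ht0, norm_sub_rev]
              exact ht2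
            calc ‖y - z‖ ≤ ‖y - (z + t • (x 0 - z))‖ + ‖z + t • (x 0 - z) - z‖ := by
                  have : y - z = (y - (z + t • (x 0 - z))) + (z + t • (x 0 - z) - z) := by abel
                  rw [this]; exact norm_add_le _ _
              _ ≤ ρ / 2 + ρ / 2 := add_le_add hy hz'z
              _ = ρ := by ring
      have hFz' : F z' ≤ 0 := hz'Q z' (by simp [hρ₂.le])
      -- invariant
      have hinv : ∀ k, ‖x k - z'‖ ≤ ‖x 0 - z'‖ := by
        intro k
        induction k with
        | zero => exact le_refl _
        | succ k ih =>
          have hball : ‖x k - x 0‖ < r := by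
            calc ‖x k - x 0‖ ≤ ‖x k - z'‖ + ‖z' - x 0‖ := by
                  have : x k - x 0 = (x k - z') + (z' - x 0) := by abel
                  rw [this]; exact norm_add_le _ _
              _ ≤ ‖x 0 - z'‖ + ‖z' - x 0‖ := by linarith
              _ = 2 * ‖z' - x 0‖ := by rw [norm_sub_rev (x 0) z']; ring
              _ < r := by linarith
          have := hfejer k z' (hnub k hball) hFz'
          have := aux_le_of_sq (norm_nonneg _) (norm_nonneg _)
            (le_trans this (by nlinarith [norm_nonneg (x k - z'), norm_nonneg (x 0 - z')]))
          linarith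
      have hball : ∀ k, ‖x k - x 0‖ < r := by
        intro k
        calc ‖x k - x 0‖ ≤ ‖x k - z'‖ + ‖z' - x 0‖ := by
              have : x k - x 0 = (x k - z') + (z' - x 0) := by abel
              rw [this]; exact norm_add_le _ _
          _ ≤ ‖x 0 - z'‖ + ‖z' - x 0‖ := by linarith [hinv k]
          _ = 2 * ‖z' - x 0‖ := by rw [norm_sub_rev (x 0) z']; ring
          _ < r := by linarith
      refine ⟨hball, ?_⟩
      by_contra hpos
      push_neg at hpos
      set c := F xs / 2 with hc
      have hcpos : 0 < c := by simp [hc]; linarith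
      -- continuity: F ≥ c near xs
      obtain ⟨δ', hδ'pos, hδ'⟩ := Metric.continuousAt_iff.mp hFcont.continuousAt c hcpos
      set δ := δ' / 2 with hδdef
      have hδpos : 0 < δ := by positivity
      have hFnear : ∀ y : Euc n, ‖y - xs‖ ≤ δ → c ≤ F y := by
        intro y hy
        have : dist y xs < δ' := by rw [dist_eq_norm]; simp [hδdef] at hy ⊢; linarith
        have := hδ' this
        rw [Real.dist_eq] at this
        have := (abs_lt.mp this).1
        simp [hc] at hcpos ⊢; linarith
      set R := r + ‖x 0 - z'‖ with hR
      have hRpos : 0 < R := by positivity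
      set η := 2 * (c / M ^ 2) * (ρ₂ * (c / R)) with hη
      have hηpos : 0 < η := by positivity
      refine hcount z' η δ hηpos hδpos
        (fun k => hfejer k z' (hnub k (hball k)) hFz') ?_
      intro k hk
      have hFk : c ≤ F (x k) := hFnear _ hk
      have hν0 : ν k ≠ 0 := by
        intro h0
        have := hν k z'
        rw [h0] at this
        simp at this
        linarith
      have hνpos : 0 < ‖ν k‖ := norm_pos_iff.mpr hν0
      set z'' := z' + (ρ₂ / ‖ν k‖) • ν k with hz''
      have hz''Q : F z'' ≤ 0 := by
        refine hz'Q _ ?_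
        have : z'' - z' = (ρ₂ / ‖ν k‖) • ν k := by rw [hz'']; module
        rw [this, norm_smul, Real.norm_eq_abs, abs_of_pos (div_pos hρ₂ hνpos),
          div_mul_cancel₀ _ hνpos.ne']
      have hsub := hν k z''
      have hip : (inner ℝ (ν k) (z'' - x k) : ℝ)
          = (inner ℝ (ν k) (z' - x k) : ℝ) + ρ₂ * ‖ν k‖ := by
        have : z'' - x k = (z' - x k) + (ρ₂ / ‖ν k‖) • ν k := by rw [hz'']; module
        rw [this, inner_add_right, real_inner_smul_right,
          real_inner_self_eq_norm_mul_norm]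
        have hne := hνpos.ne'
        have hsc2 : (ρ₂ / ‖ν k‖) * (‖ν k‖ * ‖ν k‖) = ρ₂ * ‖ν k‖ := by
          field_simp
        rw [hsc2]
      have hflip : (inner ℝ (ν k) (z' - x k) : ℝ) = -(inner ℝ (ν k) (x k - z') : ℝ) := by
        rw [show z' - x k = -(x k - z') from (neg_sub _ _).symm, inner_neg_right]
      have hgap : F (x k) + ρ₂ * ‖ν k‖ ≤ (inner ℝ (ν k) (x k - z') : ℝ) := by
        rw [hip, hflip] at hsub
        linarith
      have hxz'le : ‖x k - z'‖ ≤ R := by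
        calc ‖x k - z'‖ ≤ ‖x k - x 0‖ + ‖x 0 - z'‖ := by
              have : x k - z' = (x k - x 0) + (x 0 - z') := by abel
              rw [this]; exact norm_add_le _ _
          _ ≤ R := by rw [hR]; linarith [hball k]
      have hnormlb : c / R ≤ ‖ν k‖ := by
        have h1 : (inner ℝ (ν k) (x k - z') : ℝ) ≤ ‖ν k‖ * ‖x k - z'‖ :=
          real_inner_le_norm _ _
        have h2 : ‖ν k‖ * ‖x k - z'‖ ≤ ‖ν k‖ * R :=
          mul_le_mul_of_nonneg_left hxz'le (norm_nonneg _)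
        rw [div_le_iff₀ hRpos]
        nlinarith [mul_nonneg hρ₂.le hνpos.le]
      have hlamlb : c / M ^ 2 ≤ lam k := by
        have h1 := (halg k).2.1
        have h2 : c ≤ max 0 (F (x k)) := le_trans hFk (le_max_right _ _)
        rw [div_le_iff₀ (by positivity : (0:ℝ) < M ^ 2)]
        linarith
      have hdk := hdec k z' (hnub k (hball k))
      have hmax : max 0 (F (x k)) = F (x k) := max_eq_right (by linarith)
      have hkey : η ≤ 2 * lam k * ((inner ℝ (ν k) (x k - z') : ℝ) - max 0 (F (x k))) := by
        rw [hmax]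
        have hg2 : ρ₂ * (c / R) ≤ ρ₂ * ‖ν k‖ := mul_le_mul_of_nonneg_left hnormlb hρ₂.le
        have hg3 : ρ₂ * ‖ν k‖ ≤ (inner ℝ (ν k) (x k - z') : ℝ) - F (x k) := by linarith
        have hlam0 : 0 < lam k := lt_of_lt_of_le (by positivity) hlamlb
        calc η = 2 * (c / M ^ 2) * (ρ₂ * (c / R)) := hη
          _ ≤ 2 * lam k * (ρ₂ * (c / R)) := by
              have : (0:ℝ) ≤ ρ₂ * (c / R) := by positivity
              nlinarith
          _ ≤ 2 * lam k * ((inner ℝ (ν k) (x k - z') : ℝ) - F (x k)) := by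
              have := le_trans hg2 hg3
              nlinarith
      linarith
    · -- case (ii): strict convexity
      obtain ⟨z₀, hz₀b, hz₀F⟩ := hfeas
      have hz₀r : ‖z₀ - x 0‖ ≤ r / 2 := by
        rw [Metric.mem_closedBall, dist_eq_norm] at hz₀b; exact hz₀b
      -- midpoint gap from subgradient
      have hmidsub : ∀ k, 2 * (F (x k) - F ((1 / 2 : ℝ) • x k + (1 / 2 : ℝ) • z₀))
          ≤ (inner ℝ (ν k) (x k - z₀) : ℝ) := by
        intro k
        have hsub := hν k ((1 / 2 : ℝ) • x k + (1 / 2 : ℝ) • z₀)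
        have hmid : (1 / 2 : ℝ) • x k + (1 / 2 : ℝ) • z₀ - x k
            = -((1 / 2 : ℝ) • (x k - z₀)) := by
          rw [smul_sub]
          module
        rw [hmid, inner_neg_right, real_inner_smul_right] at hsub
        linarith
      -- strict convexity midpoint inequality
      have hstrict : ∀ y : Euc n, y ≠ z₀ →
          F ((1 / 2 : ℝ) • y + (1 / 2 : ℝ) • z₀) < (1 / 2) * F y + (1 / 2) * F z₀ := by
        intro y hy
        exact hsc.2 (Set.mem_univ y) (Set.mem_univ z₀) hy
          (by norm_num) (by norm_num) (by norm_num)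
      -- invariant
      have hinv : ∀ k, ‖x k - z₀‖ ≤ r / 2 ∧ ‖x k - x 0‖ < r := by
        intro k
        induction k with
        | zero =>
          constructor
          · rw [norm_sub_rev]; exact hz₀r
          · simpa using hr
        | succ k ih =>
          obtain ⟨ihz, ihb⟩ := ih
          have hνM := hnub k ihb
          rcases eq_or_lt_of_le (halg k).1 with hl | hl
          · have : x (k + 1) = x k := by rw [hxstep k, ← hl]; simp
            rw [this]; exact ⟨ihz, ihb⟩
          · have hFpos : 0 < F (x k) := by
              by_contra h
              push_neg at h
              have h2 := (halg k).2.2.1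
              rw [max_eq_left h] at h2
              nlinarith [mul_pos hl (pow_pos hM 2)]
            have hne : x k ≠ z₀ := by
              intro h
              rw [h] at hFpos; linarith
            have hmid := hstrict (x k) hne
            have hms := hmidsub k
            have hgap : F (x k) < (inner ℝ (ν k) (x k - z₀) : ℝ) := by linarith
            have hdk := hdec k z₀ hνM
            have hmax : max 0 (F (x k)) = F (x k) := max_eq_right hFpos.le
            rw [hmax] at hdk
            have hdrop : ‖x (k + 1) - z₀‖ ^ 2 < ‖x k - z₀‖ ^ 2 := by
              nlinarith
            have hlt : ‖x (k + 1) - z₀‖ < r / 2 := by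
              apply aux_lt_of_sq (norm_nonneg _) (by linarith)
              calc ‖x (k + 1) - z₀‖ ^ 2 < ‖x k - z₀‖ ^ 2 := hdrop
                _ ≤ (r / 2) ^ 2 := by nlinarith [norm_nonneg (x k - z₀)]
            constructor
            · linarith
            · have htri : ‖x (k + 1) - x 0‖ ≤ ‖x (k + 1) - z₀‖ + ‖z₀ - x 0‖ := by
                have : x (k + 1) - x 0 = (x (k + 1) - z₀) + (z₀ - x 0) := by abel
                rw [this]; exact norm_add_le _ _
              linarith
      have hball : ∀ k, ‖x k - x 0‖ < r := fun k => (hinv k).2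
      refine ⟨hball, ?_⟩
      by_contra hpos
      push_neg at hpos
      set c := F xs / 2 with hc
      have hcpos : 0 < c := by simp [hc]; linarith
      obtain ⟨δ', hδ'pos, hδ'⟩ := Metric.continuousAt_iff.mp hFcont.continuousAt c hcpos
      have hxsne : xs ≠ z₀ := by
        intro h; rw [h] at hpos; linarith
      have hxz₀ : 0 < ‖xs - z₀‖ := by
        rw [norm_pos_iff]; exact sub_ne_zero.mpr hxsne
      set δ := min (δ' / 2) (‖xs - z₀‖ / 2) with hδdef
      have hδpos : 0 < δ := lt_min (by positivity) (by positivity)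
      have hFnear : ∀ y : Euc n, ‖y - xs‖ ≤ δ → c ≤ F y := by
        intro y hy
        have hle : ‖y - xs‖ ≤ δ' / 2 := le_trans hy (min_le_left _ _)
        have : dist y xs < δ' := by rw [dist_eq_norm]; linarith
        have := hδ' this
        rw [Real.dist_eq] at this
        have := (abs_lt.mp this).1
        simp [hc] at hcpos ⊢; linarith
      -- uniform gap on compact ball
      set G := fun y : Euc n => F y + F z₀ - 2 * F ((1 / 2 : ℝ) • y + (1 / 2 : ℝ) • z₀)
        with hG
      have hGcont : Continuous G := by
        have h1 : Continuous fun y : Euc n => (1 / 2 : ℝ) • y + (1 / 2 : ℝ) • z₀ := by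
          exact (continuous_const_smul (1 / 2 : ℝ)).add continuous_const
        exact ((hFcont.add continuous_const).sub
          (continuous_const.mul (hFcont.comp h1)))
      have hKc : IsCompact (Metric.closedBall xs δ) := isCompact_closedBall xs δ
      have hKne : (Metric.closedBall xs δ).Nonempty := ⟨xs, by simp [hδpos.le]⟩
      obtain ⟨y₀, hy₀K, hy₀min⟩ := hKc.exists_isMinOn hKne hGcont.continuousOn
      have hy₀min' := isMinOn_iff.mp hy₀min
      have hKnez₀ : ∀ y ∈ Metric.closedBall xs δ, y ≠ z₀ := by
        intro y hy
        rw [Metric.mem_closedBall, dist_eq_norm] at hy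
        intro h
        rw [h] at hy
        have hδle : δ ≤ ‖xs - z₀‖ / 2 := min_le_right _ _
        have : ‖xs - z₀‖ ≤ ‖xs - z₀‖ / 2 := by
          calc ‖xs - z₀‖ = ‖z₀ - xs‖ := (norm_sub_rev _ _)
            _ ≤ δ := hy
            _ ≤ ‖xs - z₀‖ / 2 := hδle
        linarith
      have hεpos : 0 < G y₀ := by
        have := hstrict y₀ (hKnez₀ y₀ hy₀K)
        simp only [hG]
        linarith
      set ε := G y₀ with hε
      set η := 2 * (c / M ^ 2) * ε with hη
      have hηpos : 0 < η := by positivity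
      refine hcount z₀ η δ hηpos hδpos
        (fun k => hfejer k z₀ (hnub k (hball k)) hz₀F) ?_
      intro k hk
      have hFk : c ≤ F (x k) := hFnear _ hk
      have hGk : ε ≤ G (x k) := hy₀min' _ (by
        rw [Metric.mem_closedBall, dist_eq_norm]; exact hk)
      have hms := hmidsub k
      have hGk' : ε ≤ F (x k) + F z₀ - 2 * F ((1 / 2 : ℝ) • x k + (1 / 2 : ℝ) • z₀) :=
        hGk
      have hgap : F (x k) + ε ≤ (inner ℝ (ν k) (x k - z₀) : ℝ) := by
        have h2m : 2 * F ((1 / 2 : ℝ) • x k + (1 / 2 : ℝ) • z₀)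
            ≤ F (x k) + F z₀ - ε := by linarith [hGk']
        have htest : 2 * (F (x k) - F ((1 / 2 : ℝ) • x k + (1 / 2 : ℝ) • z₀))
            ≤ (inner ℝ (ν k) (x k - z₀) : ℝ) := hms
        have P2 : F (x k) + ε ≤ 2 * (F (x k) - F ((1 / 2 : ℝ) • x k + (1 / 2 : ℝ) • z₀)) := by
          linarith [h2m, hz₀F]
        exact le_trans P2 htest
      have hlamlb : c / M ^ 2 ≤ lam k := by
        have h1 := (halg k).2.1
        have h2 : c ≤ max 0 (F (x k)) := le_trans hFk (le_max_right _ _)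
        rw [div_le_iff₀ (by positivity : (0:ℝ) < M ^ 2)]
        linarith
      have hdk := hdec k z₀ (hnub k (hball k))
      have hmax : max 0 (F (x k)) = F (x k) := max_eq_right (by linarith)
      have hkey : η ≤ 2 * lam k * ((inner ℝ (ν k) (x k - z₀) : ℝ) - max 0 (F (x k))) := by
        rw [hmax]
        have hlam0 : 0 < lam k := lt_of_lt_of_le (by positivity) hlamlb
        calc η = 2 * (c / M ^ 2) * ε := hη
          _ ≤ 2 * lam k * ε := by
              have h1 : (c / M ^ 2) * ε ≤ lam k * ε :=
                mul_le_mul_of_nonneg_right hlamlb hεpos.le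
              linarith
          _ ≤ 2 * lam k * ((inner ℝ (ν k) (x k - z₀) : ℝ) - F (x k)) := by
              have h2 : ε ≤ (inner ℝ (ν k) (x k - z₀) : ℝ) - F (x k) := by linarith
              have h3 : (0:ℝ) ≤ 2 * lam k := by linarith
              nlinarith
      linarith
  obtain ⟨hball, hQ⟩ := main
  -- final: Fejér monotonicity with respect to xs
  have hf2 : ∀ k, ‖x (k + 1) - xs‖ ≤ ‖x k - xs‖ := by
    intro k
    exact aux_le_of_sq (norm_nonneg _) (norm_nonneg _)
      (hfejer k xs (hnub k (hball k)) hQ)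
  have hanti : Antitone fun k => ‖x k - xs‖ := antitone_nat_of_succ_le hf2
  rw [Metric.tendsto_atTop]
  intro ε hε
  obtain ⟨J, hJ⟩ := (Metric.tendsto_atTop.mp hφtend) ε hε
  refine ⟨φ J, fun k hk => ?_⟩
  have h1 := hJ J le_rfl
  rw [Function.comp_apply, dist_eq_norm] at h1
  have h2 : ‖x k - xs‖ ≤ ‖x (φ J) - xs‖ := hanti hk
  rw [dist_eq_norm]
  linarith
end
end

section
/- (Corollary 4.6(i).) Suppose the convex feasibility problem has no solution (f(x) > 0 for all x ∈ ℝⁿ) and the envelope f is strictly convex. Let {x^k} be any sequence generated by Algorithm 3.1 (for arbitrary M > 0 and x⁰). If {x^k} is bounded and ‖x^{k+1} − x^k‖ → 0 as k → ∞, then f has a (necessarily unique) global minimizer, the sequence {x^k} converges to that minimizer, and f(x^k) → inf{f(x) : x ∈ ℝⁿ}. -/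
open Filter Topology

noncomputable section

lemma subgrad_envl {n m : ℕ} [NeZero m] (f : Fin m → Euc n → ℝ)
    (p : Euc n) (w : Fin m → ℝ) (ξ : Fin m → Euc n)
    (hw0 : ∀ i, 0 ≤ w i) (hw1 : (∑ i, w i) = 1)
    (hact : ∀ i, f i p < envl f p → w i = 0)
    (hsub : ∀ i, IsSubgradAt (f i) p (ξ i)) :
    IsSubgradAt (envl f) p (∑ i, w i • ξ i) := by
  intro y
  have hin : (inner ℝ (∑ i, w i • ξ i) (y - p) : ℝ) = ∑ i, w i * (inner ℝ (ξ i) (y - p) : ℝ) := by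
    rw [sum_inner]
    exact Finset.sum_congr rfl fun i _ => real_inner_smul_left _ _ _
  have h1 : envl f p + (inner ℝ (∑ i, w i • ξ i) (y - p) : ℝ)
      = ∑ i, w i * (f i p + (inner ℝ (ξ i) (y - p) : ℝ)) := by
    rw [hin, show (∑ i, w i * (f i p + (inner ℝ (ξ i) (y - p) : ℝ)))
        = (∑ i, w i * f i p) + ∑ i, w i * (inner ℝ (ξ i) (y - p) : ℝ) from by
      rw [← Finset.sum_add_distrib]; exact Finset.sum_congr rfl fun i _ => mul_add _ _ _]
    congr 1
    have : envl f p = ∑ i, w i * envl f p := by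
      rw [← Finset.sum_mul, hw1, one_mul]
    rw [this]
    refine Finset.sum_congr rfl fun i _ => ?_
    rcases lt_or_eq_of_le (Finset.le_sup' (fun i => f i p) (Finset.mem_univ i)) with h | h
    · rw [hact i h]; ring
    · rw [h]; rfl
  rw [h1]
  calc ∑ i, w i * (f i p + (inner ℝ (ξ i) (y - p) : ℝ))
      ≤ ∑ i, w i * envl f y := by
        refine Finset.sum_le_sum fun i _ => mul_le_mul_of_nonneg_left ?_ (hw0 i)
        exact (hsub i y).trans (Finset.le_sup' (fun i => f i y) (Finset.mem_univ i))
    _ = envl f y := by rw [← Finset.sum_mul, hw1, one_mul]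

lemma cluster_isMin {n m : ℕ} [NeZero m] (f : Fin m → Euc n → ℝ)
    (M : ℝ) (x : ℕ → Euc n) (lam : ℕ → ℝ)
    (halg : IsAlgSeq f M x lam)
    (hnosol : ∀ y : Euc n, 0 < envl f y)
    (Fcont : Continuous (envl f))
    (C : ℝ) (hC : ∀ k, ‖x k‖ ≤ C)
    (hdiff : Tendsto (fun k => ‖x (k + 1) - x k‖) atTop (𝓝 0))
    (φ : ℕ → ℕ) (hφ : Tendsto φ atTop atTop)
    (a : Euc n) (ha : Tendsto (x ∘ φ) atTop (𝓝 a)) :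
    ∀ y : Euc n, envl f a ≤ envl f y := by
  have hnu : ∀ k, ∃ ν : Euc n, IsSubgradAt (envl f) (x k) ν ∧ x (k + 1) = x k - lam k • ν := by
    intro k
    obtain ⟨hl0, _, _, w, ξ, hw0, hw1, hact, hsub, hrec⟩ := halg k
    exact ⟨∑ i, w i • ξ i, subgrad_envl f _ w ξ hw0 hw1 hact hsub, hrec⟩
  choose ν hνsub hνrec using hnu
  have hnorm : ∀ k, ‖x (k + 1) - x k‖ = lam k * ‖ν k‖ := by
    intro k
    rw [hνrec k, sub_sub_cancel_left, norm_neg, norm_smul, Real.norm_eq_abs,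
      abs_of_nonneg (halg k).1]
  have hbound : ∀ k, ‖ν k‖ ≤ M ^ 2 * ‖x (k + 1) - x k‖ / envl f (x k) := by
    intro k
    obtain ⟨hl0, hlow, -⟩ := halg k
    rw [max_eq_right (hnosol (x k)).le] at hlow
    rw [le_div_iff₀ (hnosol (x k))]
    calc ‖ν k‖ * envl f (x k) ≤ ‖ν k‖ * (lam k * M ^ 2) :=
          mul_le_mul_of_nonneg_left hlow (norm_nonneg _)
      _ = M ^ 2 * (lam k * ‖ν k‖) := by ring
      _ = M ^ 2 * ‖x (k + 1) - x k‖ := by rw [hnorm k]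
  have hFx : Tendsto (fun j => envl f (x (φ j))) atTop (𝓝 (envl f a)) :=
    (Fcont.tendsto a).comp ha
  have hΔ : Tendsto (fun j => ‖x (φ j + 1) - x (φ j)‖) atTop (𝓝 0) := hdiff.comp hφ
  have hb : Tendsto (fun j => M ^ 2 * ‖x (φ j + 1) - x (φ j)‖ / envl f (x (φ j)))
      atTop (𝓝 0) := by
    have h1 : Tendsto (fun j => M ^ 2 * ‖x (φ j + 1) - x (φ j)‖) atTop (𝓝 (M ^ 2 * 0)) :=
      tendsto_const_nhds.mul hΔ
    have h2 := h1.div hFx (ne_of_gt (hnosol a))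
    rw [mul_zero, zero_div] at h2; exact h2
  have hν0 : Tendsto (fun j => ‖ν (φ j)‖) atTop (𝓝 0) :=
    squeeze_zero (fun j => norm_nonneg _) (fun j => hbound (φ j)) hb
  intro y
  have hin0 : Tendsto (fun j => (inner ℝ (ν (φ j)) (y - x (φ j)) : ℝ)) atTop (𝓝 0) := by
    have hbnd : ∀ j, ‖(inner ℝ (ν (φ j)) (y - x (φ j)) : ℝ)‖ ≤ ‖ν (φ j)‖ * (‖y‖ + C) := by
      intro j
      calc ‖(inner ℝ (ν (φ j)) (y - x (φ j)) : ℝ)‖ ≤ ‖ν (φ j)‖ * ‖y - x (φ j)‖ :=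
            norm_inner_le_norm _ _
        _ ≤ ‖ν (φ j)‖ * (‖y‖ + C) := by
            refine mul_le_mul_of_nonneg_left ?_ (norm_nonneg _)
            exact (norm_sub_le _ _).trans (add_le_add le_rfl (hC (φ j)))
    have hlim : Tendsto (fun j => ‖ν (φ j)‖ * (‖y‖ + C)) atTop (𝓝 0) := by
      simpa using hν0.mul_const (‖y‖ + C)
    exact squeeze_zero_norm hbnd hlim
  have hsum : Tendsto (fun j => envl f (x (φ j)) + (inner ℝ (ν (φ j)) (y - x (φ j)) : ℝ))
      atTop (𝓝 (envl f a + 0)) := hFx.add hin0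
  rw [add_zero] at hsum
  exact le_of_tendsto hsum (Eventually.of_forall fun j => hνsub (φ j) y)

theorem stmt8
    {n m : ℕ} (hn : 0 < n) [NeZero m] (f : Fin m → Euc n → ℝ)
    (hconv : ∀ i, ConvexOn ℝ Set.univ (f i))
    (M : ℝ) (hM : 0 < M) (x : ℕ → Euc n) (lam : ℕ → ℝ)
    (halg : IsAlgSeq f M x lam) (x0 : Euc n) (hx0 : x 0 = x0)
    (hnosol : ∀ y : Euc n, 0 < envl f y)
    (hstrict : StrictConvexOn ℝ Set.univ (envl f))
    (hbdd : ∃ C : ℝ, ∀ k : ℕ, ‖x k‖ ≤ C)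
    (hdiff : Tendsto (fun k => ‖x (k + 1) - x k‖) atTop (𝓝 0)) :
    ∃ xs : Euc n, (∀ y : Euc n, envl f xs ≤ envl f y) ∧
      (∀ y : Euc n, (∀ z : Euc n, envl f y ≤ envl f z) → y = xs) ∧
      Tendsto x atTop (𝓝 xs) ∧
      Tendsto (fun k => envl f (x k)) atTop (𝓝 (⨅ y : Euc n, envl f y)) := by
  obtain ⟨C, hC⟩ := hbdd
  have Fcont : Continuous (envl f) := by
    rw [← continuousOn_univ]
    exact hstrict.convexOn.continuousOn isOpen_univ
  have hmem : ∀ k, x k ∈ Metric.closedBall (0 : Euc n) C := fun k => by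
    simpa [Metric.mem_closedBall, dist_zero_right] using hC k
  obtain ⟨a, -, φ, hφmono, hφlim⟩ :=
    tendsto_subseq_of_bounded (Metric.isBounded_closedBall (x := (0 : Euc n)) (r := C)) hmem
  have hamin : ∀ y, envl f a ≤ envl f y :=
    cluster_isMin f M x lam halg hnosol Fcont C hC hdiff φ hφmono.tendsto_atTop a hφlim
  have huniq : ∀ y : Euc n, (∀ z, envl f y ≤ envl f z) → y = a := by
    intro y hy
    exact hstrict.eq_of_isMinOn (isMinOn_iff.mpr fun z _ => hy z)
      (isMinOn_iff.mpr fun z _ => hamin z) (Set.mem_univ y) (Set.mem_univ a)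
  have hxa : Tendsto x atTop (𝓝 a) := by
    apply tendsto_of_subseq_tendsto
    intro ns hns
    obtain ⟨a', -, ψ, hψmono, hψlim⟩ :=
      tendsto_subseq_of_bounded (Metric.isBounded_closedBall (x := (0 : Euc n)) (r := C))
        (fun j => hmem (ns j))
    have hmin' : ∀ y, envl f a' ≤ envl f y :=
      cluster_isMin f M x lam halg hnosol Fcont C hC hdiff (ns ∘ ψ)
        (hns.comp hψmono.tendsto_atTop) a' hψlim
    have ha' : a' = a := huniq a' hmin'
    exact ⟨ψ, ha' ▸ hψlim⟩
  have hinf : (⨅ y : Euc n, envl f y) = envl f a := by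
    apply le_antisymm
    · exact ciInf_le ⟨envl f a, by rintro r ⟨y, rfl⟩; exact hamin y⟩ a
    · exact le_ciInf hamin
  exact ⟨a, hamin, huniq, hxa, by rw [hinf]; exact (Fcont.tendsto a).comp hxa⟩
end
end

section
/- (Corollary 4.6(ii).) Suppose the convex feasibility problem has no solution (f(x) > 0 for all x ∈ ℝⁿ) and the envelope f is strictly convex. Let {x^k} be any sequence generated by Algorithm 3.1 (for arbitrary M > 0 and x⁰). If f has no global minimizer, then either the sequence {x^k} is unbounded, or the sequence ‖x^{k+1} − x^k‖ does not converge to zero. -/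
open Filter Topology

noncomputable section

theorem stmt9
    {n m : ℕ} (hn : 0 < n) [NeZero m] (f : Fin m → Euc n → ℝ)
    (hconv : ∀ i, ConvexOn ℝ Set.univ (f i))
    (M : ℝ) (hM : 0 < M) (x : ℕ → Euc n) (lam : ℕ → ℝ)
    (halg : IsAlgSeq f M x lam) (x0 : Euc n) (hx0 : x 0 = x0)
    (hnosol : ∀ y : Euc n, 0 < envl f y)
    (hstrict : StrictConvexOn ℝ Set.univ (envl f))
    (hnomin : ¬ ∃ xs : Euc n, ∀ y : Euc n, envl f xs ≤ envl f y) :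
    (¬ ∃ C : ℝ, ∀ k : ℕ, ‖x k‖ ≤ C) ∨
    ¬ Tendsto (fun k => ‖x (k + 1) - x k‖) atTop (𝓝 0) := by
  by_contra h
  push_neg at h
  obtain ⟨⟨C, hC⟩, hstep⟩ := h
  set F := envl f with hF
  have hFconv : ConvexOn ℝ Set.univ F := hstrict.convexOn
  have hFcont : Continuous F := by
    rw [← continuousOn_univ]
    exact hFconv.continuousOn isOpen_univ
  have hM2 : (0:ℝ) < M ^ 2 := by positivity
  -- membership of the x k in the closed ball
  have hmem : ∀ k, x k ∈ Metric.closedBall (0 : Euc n) C := by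
    intro k
    simpa [Metric.mem_closedBall, dist_zero_right] using hC k
  obtain ⟨z, hzK, hz⟩ := (isCompact_closedBall (0:Euc n) C).exists_isMinOn
      ⟨x 0, hmem 0⟩ hFcont.continuousOn
  set c := F z with hc
  have hcpos : 0 < c := hnosol z
  have hfk : ∀ k, c ≤ F (x k) := fun k => hz (hmem k)
  choose hlam0 hlam1 hlam2 w ξ hw0 hw1 hwz hsub hxk using halg
  set ν : ℕ → Euc n := fun k => ∑ i, w k i • ξ k i with hν
  -- ν k is a subgradient of F at x k
  have hνsub : ∀ k, IsSubgradAt F (x k) (ν k) := by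
    intro k y
    have hle : ∀ i ∈ Finset.univ, w k i * (F (x k) + (inner ℝ (ξ k i) (y - x k) : ℝ))
        ≤ w k i * F y := by
      intro i _
      rcases eq_or_lt_of_le (hw0 k i) with h0 | hpos
      · simp [← h0]
      · have hfi : f i (x k) = F (x k) := by
          by_contra hne
          have : f i (x k) < F (x k) :=
            lt_of_le_of_ne (Finset.le_sup' (fun j => f j (x k)) (Finset.mem_univ i)) hne
          exact hpos.ne (hwz k i this).symm
        have h1 : F (x k) + (inner ℝ (ξ k i) (y - x k) : ℝ) ≤ f i y := by
          rw [← hfi]; exact hsub k i y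
        have h2 : f i y ≤ F y := Finset.le_sup' (fun j => f j y) (Finset.mem_univ i)
        exact mul_le_mul_of_nonneg_left (h1.trans h2) (hw0 k i)
    calc F (x k) + (inner ℝ (ν k) (y - x k) : ℝ)
        = ∑ i, w k i * (F (x k) + (inner ℝ (ξ k i) (y - x k) : ℝ)) := by
          simp only [hν, sum_inner, real_inner_smul_left, mul_add,
            Finset.sum_add_distrib, ← Finset.sum_mul, hw1 k, one_mul]
      _ ≤ ∑ i, w k i * F y := Finset.sum_le_sum hle
      _ = F y := by rw [← Finset.sum_mul, hw1 k, one_mul]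
  -- lower bound on lam
  have hlamlb : ∀ k, c / M ^ 2 ≤ lam k := by
    intro k
    rw [div_le_iff₀ hM2]
    exact le_trans ((hfk k).trans (le_max_right _ _)) (hlam1 k)
  have hstepeq : ∀ k, ‖x (k + 1) - x k‖ = lam k * ‖ν k‖ := by
    intro k
    rw [hxk k]
    simp [norm_smul, abs_of_nonneg (hlam0 k)]
    exact Or.inl rfl
  -- ν → 0
  have hν0 : Tendsto (fun k => ‖ν k‖) atTop (𝓝 0) := by
    apply squeeze_zero (fun k => norm_nonneg _)
      (g := fun k => (M ^ 2 / c) * ‖x (k + 1) - x k‖)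
    · intro k
      rw [hstepeq k]
      calc ‖ν k‖ = (M ^ 2 / c) * ((c / M ^ 2) * ‖ν k‖) := by
            field_simp
        _ ≤ (M ^ 2 / c) * (lam k * ‖ν k‖) := by
            apply mul_le_mul_of_nonneg_left _ (by positivity)
            exact mul_le_mul_of_nonneg_right (hlamlb k) (norm_nonneg _)
    · simpa using (hstep.const_mul (M ^ 2 / c))
  -- convergent subsequence
  obtain ⟨a, haK, φ, hφ, hφlim⟩ :=
    (isCompact_closedBall (0:Euc n) C).tendsto_subseq hmem
  apply hnomin
  refine ⟨a, fun y => ?_⟩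
  have hineq : ∀ j, F (x (φ j)) ≤ F y + ‖ν (φ j)‖ * (C + ‖y‖) := by
    intro j
    have h1 := hνsub (φ j) y
    have h2 : -(inner ℝ (ν (φ j)) (y - x (φ j)) : ℝ) ≤ ‖ν (φ j)‖ * (C + ‖y‖) := by
      calc -(inner ℝ (ν (φ j)) (y - x (φ j)) : ℝ)
          = (inner ℝ (ν (φ j)) (x (φ j) - y) : ℝ) := by rw [← inner_neg_right, neg_sub]
        _ ≤ ‖ν (φ j)‖ * ‖x (φ j) - y‖ := real_inner_le_norm _ _
        _ ≤ ‖ν (φ j)‖ * (C + ‖y‖) := by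
            apply mul_le_mul_of_nonneg_left _ (norm_nonneg _)
            exact (norm_sub_le _ _).trans (add_le_add (hC _) le_rfl)
    linarith
  have hlim1 : Tendsto (fun j => F (x (φ j))) atTop (𝓝 (F a)) :=
    (hFcont.tendsto a).comp hφlim
  have hlim2 : Tendsto (fun j => F y + ‖ν (φ j)‖ * (C + ‖y‖)) atTop (𝓝 (F y)) := by
    have : Tendsto (fun j => ‖ν (φ j)‖ * (C + ‖y‖)) atTop (𝓝 (0 * (C + ‖y‖))) :=
      (hν0.comp hφ.tendsto_atTop).mul_const _
    simpa using tendsto_const_nhds.add this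
  exact le_of_tendsto_of_tendsto' hlim1 hlim2 hineq
end
end

section
/- (Remark following Corollary 4.6.) Suppose the convex feasibility problem has no solution (f(x) > 0 for all x ∈ ℝⁿ). Let {x^k} be any sequence generated by Algorithm 3.1 (for arbitrary M > 0 and x⁰). If there is a strictly increasing sequence of indices {k_t} such that the subsequence {x^{k_t}} is bounded and x^{k_t+1} − x^{k_t} → 0 as t → ∞, then every accumulation point of {x^{k_t}} is a global minimizer of f (strict convexity of f is not needed here). -/
open Filter Topology

noncomputable section

/-- Envelope subgradient inequality at step `k`. -/
lemma key_step {n m : ℕ} [NeZero m] (f : Fin m → Euc n → ℝ) (M : ℝ)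
    (x : ℕ → Euc n) (lam : ℕ → ℝ) (halg : IsAlgSeq f M x lam) (k : ℕ) (y : Euc n) :
    lam k * (envl f (x k) - envl f y) ≤ inner ℝ (x (k + 1) - x k) (y - x k) := by
  obtain ⟨hl0, _, _, w, ξ, hw0, hw1, hwz, hsub, hupd⟩ := halg k
  set ν : Euc n := ∑ i, w i • ξ i with hν
  -- subgradient inequality for envelope
  have hkey : envl f (x k) + (inner ℝ ν (y - x k) : ℝ) ≤ envl f y := by
    have h1 : ∀ i : Fin m, w i * (f i (x k) + (inner ℝ (ξ i) (y - x k) : ℝ))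
        ≤ w i * f i y := fun i => mul_le_mul_of_nonneg_left (hsub i y) (hw0 i)
    have h2 : ∀ i : Fin m, w i * f i (x k) = w i * envl f (x k) := by
      intro i
      rcases lt_or_eq_of_le (Finset.le_sup' (fun j => f j (x k)) (Finset.mem_univ i)) with h | h
      · rw [hwz i h]; ring
      · rw [h]; rfl
    have h3 : ∀ i : Fin m, w i * f i y ≤ w i * envl f y := fun i =>
      mul_le_mul_of_nonneg_left (Finset.le_sup' (fun j => f j y) (Finset.mem_univ i)) (hw0 i)
    have hsum := Finset.sum_le_sum (fun i (_ : i ∈ Finset.univ) => (h1 i).trans (h3 i))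
    have hin : (inner ℝ ν (y - x k) : ℝ) = ∑ i, w i * (inner ℝ (ξ i) (y - x k) : ℝ) := by
      rw [hν, sum_inner]
      exact Finset.sum_congr rfl fun i _ => real_inner_smul_left _ _ _
    calc envl f (x k) + (inner ℝ ν (y - x k) : ℝ)
        = ∑ i, w i * (f i (x k) + (inner ℝ (ξ i) (y - x k) : ℝ)) := by
          simp only [mul_add, Finset.sum_add_distrib, hin]
          congr 1
          rw [Finset.sum_congr rfl fun i _ => h2 i, ← Finset.sum_mul, hw1, one_mul]
      _ ≤ ∑ i, w i * envl f y := hsum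
      _ = envl f y := by rw [← Finset.sum_mul, hw1, one_mul]
  have hd : x (k + 1) - x k = -(lam k • ν) := by rw [hupd]; abel
  rw [hd, inner_neg_left, real_inner_smul_left]
  nlinarith [mul_le_mul_of_nonneg_left hkey hl0]

theorem stmt10
    {n m : ℕ} (hn : 0 < n) [NeZero m] (f : Fin m → Euc n → ℝ)
    (hconv : ∀ i, ConvexOn ℝ Set.univ (f i))
    (M : ℝ) (hM : 0 < M) (x : ℕ → Euc n) (lam : ℕ → ℝ)
    (halg : IsAlgSeq f M x lam) (x0 : Euc n) (hx0 : x 0 = x0)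
    (hnosol : ∀ y : Euc n, 0 < envl f y)
    (kt : ℕ → ℕ) (hkt : StrictMono kt)
    (hbdd : ∃ C : ℝ, ∀ t : ℕ, ‖x (kt t)‖ ≤ C)
    (hdiff : Tendsto (fun t => x (kt t + 1) - x (kt t)) atTop (𝓝 0)) :
    ∀ xs : Euc n,
      (∃ φ : ℕ → ℕ, StrictMono φ ∧ Tendsto (fun t => x (kt (φ t))) atTop (𝓝 xs)) →
      ∀ y : Euc n, envl f xs ≤ envl f y := by
  obtain ⟨C, hC⟩ := hbdd
  rintro xs ⟨φ, hφ, hlim⟩ y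
  by_contra hlt
  push_neg at hlt
  -- continuity of the envelope
  have hcont : Continuous (envl f) := by
    apply Continuous.finset_sup'_apply Finset.univ_nonempty
    intro i _
    exact continuousOn_univ.mp ((hconv i).continuousOn isOpen_univ)
  -- limit of envelope values along the subsequence
  have hflim : Tendsto (fun t => envl f (x (kt (φ t)))) atTop (𝓝 (envl f xs)) :=
    (hcont.tendsto xs).comp hlim
  set μ : ℝ := (envl f xs + envl f y) / 2 with hμ
  have hμpos : 0 < μ := by have := hnosol xs; have := hnosol y; positivity
  have hμlt : μ < envl f xs := by simp only [hμ]; linarith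
  set δ : ℝ := (envl f xs - envl f y) / 2 with hδ
  have hδpos : 0 < δ := by simp only [hδ]; linarith
  set c : ℝ := μ / M ^ 2 * δ with hc
  have hcpos : 0 < c := by positivity
  -- a_t ≤ b_t
  have hab : ∀ t, lam (kt (φ t)) * (envl f (x (kt (φ t))) - envl f y)
      ≤ inner ℝ (x (kt (φ t) + 1) - x (kt (φ t))) (y - x (kt (φ t))) :=
    fun t => key_step f M x lam halg (kt (φ t)) y
  -- b_t → 0
  have hblim : Tendsto (fun t =>
      (inner ℝ (x (kt (φ t) + 1) - x (kt (φ t))) (y - x (kt (φ t))) : ℝ)) atTop (𝓝 0) := by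
    have hd2 : Tendsto (fun t => x (kt (φ t) + 1) - x (kt (φ t))) atTop (𝓝 0) :=
      hdiff.comp (hφ.tendsto_atTop)
    have hdn : Tendsto (fun t => ‖x (kt (φ t) + 1) - x (kt (φ t))‖) atTop (𝓝 0) := by
      simpa [Function.comp_def] using (continuous_norm.tendsto (0 : Euc n)).comp hd2
    apply squeeze_zero_norm (a := fun t => ‖x (kt (φ t) + 1) - x (kt (φ t))‖ * (‖y‖ + C))
    · intro t
      calc ‖(inner ℝ (x (kt (φ t) + 1) - x (kt (φ t))) (y - x (kt (φ t))) : ℝ)‖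
          ≤ ‖x (kt (φ t) + 1) - x (kt (φ t))‖ * ‖y - x (kt (φ t))‖ := by
            exact norm_inner_le_norm _ _
        _ ≤ ‖x (kt (φ t) + 1) - x (kt (φ t))‖ * (‖y‖ + C) := by
            apply mul_le_mul_of_nonneg_left _ (norm_nonneg _)
            exact (norm_sub_le _ _).trans (by linarith [hC (φ t)])
    · simpa using hdn.mul_const (‖y‖ + C)
  -- eventually a_t ≥ c
  have hev : ∀ᶠ t in atTop, c ≤ lam (kt (φ t)) * (envl f (x (kt (φ t))) - envl f y) := by
    filter_upwards [hflim.eventually (eventually_gt_nhds hμlt)] with t ht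
    have he : envl f (x (kt (φ t))) > μ := ht
    have hlam2 : μ / M ^ 2 ≤ lam (kt (φ t)) := by
      obtain ⟨_, h1, _, _⟩ := halg (kt (φ t))
      rw [max_eq_right (hnosol _).le] at h1
      rw [div_le_iff₀ (by positivity)]
      linarith
    have hδ2 : δ ≤ envl f (x (kt (φ t))) - envl f y := by
      simp only [hμ] at he; simp only [hδ]; linarith
    calc c = μ / M ^ 2 * δ := rfl
      _ ≤ lam (kt (φ t)) * (envl f (x (kt (φ t))) - envl f y) :=
        mul_le_mul hlam2 hδ2 hδpos.le ((by positivity : (0:ℝ) ≤ μ / M ^ 2).trans hlam2)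
  -- contradiction
  have hev2 : ∀ᶠ t in atTop,
      (inner ℝ (x (kt (φ t) + 1) - x (kt (φ t))) (y - x (kt (φ t))) : ℝ) < c :=
    hblim.eventually (eventually_lt_nhds hcpos)
  obtain ⟨t, h1, h2⟩ := (hev.and hev2).exists
  exact absurd ((h1.trans (hab t)).trans_lt h2) (lt_irrefl c)
end
end

section
/- (Corollary 4.8.) Suppose the convex feasibility problem has no solution (f(x) > 0 for all x ∈ ℝⁿ) and the envelope f is strictly convex. Let {x^k} be any sequence generated by Algorithm 3.1 (for arbitrary M > 0 and x⁰). If the series Σ_{k=0}^∞ ‖x^k − x^{k+1}‖ converges, then f has a unique global minimizer, the sequence {x^k} converges to that minimizer, and f(x^k) → inf{f(x) : x ∈ ℝⁿ}. -/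
open Filter Topology

noncomputable section

theorem stmt11
    {n m : ℕ} (hn : 0 < n) [NeZero m] (f : Fin m → Euc n → ℝ)
    (hconv : ∀ i, ConvexOn ℝ Set.univ (f i))
    (M : ℝ) (hM : 0 < M) (x : ℕ → Euc n) (lam : ℕ → ℝ)
    (halg : IsAlgSeq f M x lam) (x0 : Euc n) (hx0 : x 0 = x0)
    (hnosol : ∀ y : Euc n, 0 < envl f y)
    (hstrict : StrictConvexOn ℝ Set.univ (envl f))
    (hsum : Summable fun k => ‖x k - x (k + 1)‖) :
    ∃ xs : Euc n, (∀ y : Euc n, envl f xs ≤ envl f y) ∧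
      (∀ y : Euc n, (∀ z : Euc n, envl f y ≤ envl f z) → y = xs) ∧
      Tendsto x atTop (𝓝 xs) ∧
      Tendsto (fun k => envl f (x k)) atTop (𝓝 (⨅ y : Euc n, envl f y)) := by

  classical
  choose hlam0 hlam1 hlam2 w ξ hw0 hwsum hwact hsub hrec using halg
  set ν : ℕ → Euc n := fun k => ∑ i, w k i • ξ k i with hν
  -- subgradient inequality for the envelope
  have key : ∀ k (y : Euc n), envl f (x k) + (inner ℝ (ν k) (y - x k) : ℝ) ≤ envl f y := by
    intro k y
    have h2 : ∀ i, w k i * f i (x k) = w k i * envl f (x k) := by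
      intro i
      rcases lt_or_eq_of_le (Finset.le_sup' (fun i => f i (x k)) (Finset.mem_univ i)) with h | h
      · rw [hwact k i h]; ring
      · rw [h]; rfl
    have heq : envl f (x k) + (inner ℝ (ν k) (y - x k) : ℝ)
        = ∑ i, w k i * (f i (x k) + (inner ℝ (ξ k i) (y - x k) : ℝ)) := by
      have : (inner ℝ (ν k) (y - x k) : ℝ) = ∑ i, w k i * (inner ℝ (ξ k i) (y - x k) : ℝ) := by
        show (inner ℝ (∑ i, w k i • ξ k i) (y - x k) : ℝ) = _
        rw [sum_inner]
        exact Finset.sum_congr rfl fun i _ => real_inner_smul_left _ _ _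
      rw [this]
      rw [show (∑ i, w k i * (f i (x k) + (inner ℝ (ξ k i) (y - x k) : ℝ)))
          = ∑ i, (w k i * f i (x k) + w k i * (inner ℝ (ξ k i) (y - x k) : ℝ)) from by
        apply Finset.sum_congr rfl; intro i _; ring]
      rw [Finset.sum_add_distrib, Finset.sum_congr rfl (fun i _ => h2 i),
        ← Finset.sum_mul, hwsum k, one_mul]
    rw [heq]
    calc ∑ i, w k i * (f i (x k) + (inner ℝ (ξ k i) (y - x k) : ℝ))
        ≤ ∑ i, w k i * envl f y := by
          apply Finset.sum_le_sum
          intro i _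
          apply mul_le_mul_of_nonneg_left _ (hw0 k i)
          exact le_trans (hsub k i y) (Finset.le_sup' (fun i => f i y) (Finset.mem_univ i))
      _ = envl f y := by rw [← Finset.sum_mul, hwsum k, one_mul]
  -- convergence of the sequence
  have hcauchy : CauchySeq x := by
    apply cauchySeq_of_summable_dist
    simpa [dist_eq_norm] using hsum
  obtain ⟨xs, hxs⟩ := cauchySeq_tendsto_of_complete hcauchy
  -- continuity of the envelope
  have hcont : ContinuousOn (envl f) Set.univ :=
    hstrict.convexOn.continuousOn isOpen_univ
  have htend : Tendsto (fun k => envl f (x k)) atTop (𝓝 (envl f xs)) :=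
    (hcont.continuousAt (isOpen_univ.mem_nhds (Set.mem_univ xs))).tendsto.comp hxs
  set L := envl f xs with hLdef
  have hL : 0 < L := hnosol xs
  have hd : ∀ k, ‖x k - x (k + 1)‖ = lam k * ‖ν k‖ := by
    intro k
    have : x k - x (k + 1) = lam k • ν k := by rw [hrec k]; abel
    rw [this, norm_smul, Real.norm_eq_abs, abs_of_nonneg (hlam0 k)]
  have hd0 : Tendsto (fun k => ‖x k - x (k + 1)‖) atTop (𝓝 0) := hsum.tendsto_atTop_zero
  have hM2 : (0:ℝ) < M ^ 2 := by positivity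
  have hev : ∀ᶠ k in atTop, L / 2 < envl f (x k) :=
    htend.eventually (eventually_gt_nhds (by linarith))
  have hlamlb : ∀ᶠ k in atTop, L / (2 * M ^ 2) ≤ lam k := by
    filter_upwards [hev] with k hk
    have h1 := hlam1 k
    have h2 : L / 2 ≤ max 0 (envl f (x k)) := le_trans hk.le (le_max_right _ _)
    rw [div_le_iff₀ (by positivity : (0:ℝ) < 2 * M ^ 2)]
    nlinarith [le_trans h2 h1]
  -- ν k → 0
  have hν0 : Tendsto ν atTop (𝓝 0) := by
    have hb : ∀ᶠ k in atTop, ‖ν k‖ ≤ (2 * M ^ 2 / L) * ‖x k - x (k + 1)‖ := by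
      filter_upwards [hlamlb] with k hk
      rw [hd k]
      rw [show (2 * M ^ 2 / L) * (lam k * ‖ν k‖) = (lam k * (2 * M ^ 2 / L)) * ‖ν k‖ from by ring]
      apply le_mul_of_one_le_left (norm_nonneg _)
      rw [div_le_iff₀ (by positivity : (0:ℝ) < 2 * M ^ 2)] at hk
      rw [show lam k * (2 * M ^ 2 / L) = (lam k * (2 * M ^ 2)) / L from by ring,
        le_div_iff₀ hL, one_mul]
      exact hk
    have hg : Tendsto (fun k => (2 * M ^ 2 / L) * ‖x k - x (k + 1)‖) atTop (𝓝 0) := by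
      simpa using hd0.const_mul (2 * M ^ 2 / L)
    exact squeeze_zero_norm' hb hg
  -- xs is a global minimizer
  have hmin : ∀ y : Euc n, envl f xs ≤ envl f y := by
    intro y
    have hinner : Tendsto (fun k => (inner ℝ (ν k) (y - x k) : ℝ)) atTop
        (𝓝 ((inner ℝ (0 : Euc n) (y - xs) : ℝ))) :=
      hν0.inner (tendsto_const_nhds.sub hxs)
    rw [inner_zero_left] at hinner
    have h := htend.add hinner
    rw [add_zero] at h
    exact le_of_tendsto h (Eventually.of_forall fun k => key k y)
  refine ⟨xs, hmin, ?_, hxs, ?_⟩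
  · intro y hy
    by_contra hne
    have heqv : envl f y = envl f xs := le_antisymm (hy xs) (hmin y)
    have hm := hstrict.2 (Set.mem_univ y) (Set.mem_univ xs) hne
      (by norm_num : (0:ℝ) < 1/2) (by norm_num : (0:ℝ) < 1/2) (by norm_num)
    have hge := hmin ((1/2 : ℝ) • y + (1/2 : ℝ) • xs)
    rw [heqv] at hm
    simp only [smul_eq_mul] at hm
    linarith
  · have hinf : (⨅ y : Euc n, envl f y) = L := by
      apply le_antisymm
      · exact ciInf_le ⟨L, by rintro _ ⟨y, rfl⟩; exact hmin y⟩ xs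
      · exact le_ciInf hmin
    rw [hinf]; exact htend
end
end

section
/- (Remark 4.7, example.) Define the real sequence {x_k} by x_0 = 0 and x_{k+1} = x_k + (3/2)·exp(−2·x_k) for all k ≥ 0. Then exp(−x_k) → 0 as k → ∞ (equivalently, x_k → +∞), even though the inequality exp(−x) ≤ 0 has no real solution. (This sequence is the one generated by Algorithm 3.1 for m = n = 1, f₁(x) = e^{−x}, x⁰ = 0, M = 1, λ_k = (3/2)·f(x^k).) -/
open Filter Topology

noncomputable section

theorem stmt12
    (x : ℕ → ℝ) (h0 : x 0 = 0)
    (hstep : ∀ k : ℕ, x (k + 1) = x k + (3 / 2) * Real.exp (-2 * x k)) :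
    Tendsto (fun k => Real.exp (-(x k))) atTop (𝓝 0) ∧
    Tendsto x atTop atTop ∧
    ∀ y : ℝ, ¬ Real.exp (-y) ≤ 0 := by
  have hmono : Monotone x := monotone_nat_of_le_succ fun k => by
    rw [hstep k]
    nlinarith [Real.exp_pos (-2 * x k)]
  have htop : Tendsto x atTop atTop := by
    rcases tendsto_of_monotone hmono with h | ⟨l, hl⟩
    · exact h
    · exfalso
      have h1 : Tendsto (fun k => x (k + 1)) atTop (𝓝 l) :=
        hl.comp (tendsto_add_atTop_nat 1)
      have h2 : Tendsto (fun k => x k + (3 / 2) * Real.exp (-2 * x k)) atTop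
          (𝓝 (l + (3 / 2) * Real.exp (-2 * l))) := by
        exact hl.add ((Real.continuous_exp.tendsto _).comp
          (by exact (tendsto_const_nhds.mul hl)) |>.const_mul _)
      have heq : l = l + (3 / 2) * Real.exp (-2 * l) := by
        refine tendsto_nhds_unique h1 ?_
        simpa only [hstep] using h2
      nlinarith [Real.exp_pos (-2 * l)]
  refine ⟨?_, htop, fun y => not_le.mpr (Real.exp_pos _)⟩
  exact Real.tendsto_exp_atBot.comp (tendsto_neg_atBot_iff.mpr htop)
end
end
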